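/- Let A generate operators e^{−At} with projection P and dichotomy constants M, β > 0: e^{−At}P = P e^{−At} for t ≥ 0, ‖e^{−At}Px‖ ≤ M e^{βt}‖x‖ for t ≤ 0, and ‖e^{−At}(I−P)x‖ ≤ M e^{−βt}‖x‖ for t ≥ 0. If y : ℝ → X is a bounded mild solution of y' + Ay = φ(t) with φ bounded continuous, meaning y(t) = e^{−A(t−τ)}y(τ) + ∫_τ^t e^{−A(t−s)}φ(s) ds for all τ ≤ t, then Py(t) = −∫_t^∞ e^{−A(t−s)}Pφ(s) ds and (I−P)y(t) = ∫_{−∞}^t e^{−A(t−s)}(I−P)φ(s) ds for all t ∈ ℝ. -/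

import Mathlib

open MeasureTheory Filter

theorem aux_joint_cont {X : Type*} [NormedAddCommGroup X] [NormedSpace ℝ X] [CompleteSpace X]
    (T : ℝ → X →L[ℝ] X) (hTc : ∀ x : X, Continuous fun r : ℝ => T r x)
    {g : ℝ → ℝ} {f : ℝ → X} (hg : Continuous g) (hf : Continuous f) :
    Continuous fun s => T (g s) (f s) := by
  rw [continuous_iff_continuousAt]
  intro s₀
  obtain ⟨C, hC⟩ : ∃ C, ∀ r : Set.Icc (g s₀ - 1) (g s₀ + 1), ‖T (r : ℝ)‖ ≤ C := by
    apply banach_steinhaus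
    intro x
    obtain ⟨C, hC⟩ := (isCompact_Icc (a := g s₀ - 1) (b := g s₀ + 1)).exists_bound_of_continuousOn
      (hTc x).continuousOn
    exact ⟨C, fun r => hC r r.2⟩
  have hev : ∀ᶠ s in nhds s₀, g s ∈ Set.Icc (g s₀ - 1) (g s₀ + 1) :=
    hg.continuousAt (Icc_mem_nhds (by linarith) (by linarith))
  have key : Tendsto (fun s => T (g s) (f s) - T (g s₀) (f s₀)) (nhds s₀) (nhds 0) := by
    apply squeeze_zero_norm'
      (a := fun s => C * ‖f s - f s₀‖ + ‖T (g s) (f s₀) - T (g s₀) (f s₀)‖)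
    · filter_upwards [hev] with s hs
      have h3 : T (g s) (f s) - T (g s₀) (f s₀)
          = (T (g s) (f s) - T (g s) (f s₀)) + (T (g s) (f s₀) - T (g s₀) (f s₀)) := by abel
      rw [h3]
      refine (norm_add_le _ _).trans (add_le_add ?_ le_rfl)
      rw [← map_sub]
      calc ‖T (g s) (f s - f s₀)‖ ≤ ‖T (g s)‖ * ‖f s - f s₀‖ := (T (g s)).le_opNorm _
        _ ≤ C * ‖f s - f s₀‖ := mul_le_mul_of_nonneg_right (hC ⟨g s, hs⟩) (norm_nonneg _)
    · have c1 : Continuous fun s => C * ‖f s - f s₀‖ :=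
        continuous_const.mul ((hf.sub continuous_const).norm)
      have c2 : Continuous fun s => ‖T (g s) (f s₀) - T (g s₀) (f s₀)‖ :=
        (((hTc (f s₀)).comp hg).sub continuous_const).norm
      exact (c1.add c2).tendsto' s₀ 0 (by simp)
  exact tendsto_sub_nhds_zero_iff.mp key

theorem aux_exp_Iic (β t : ℝ) (hβ : 0 < β) :
    IntegrableOn (fun s : ℝ => Real.exp (β * s)) (Set.Iic t) := by
  rw [← (Measure.measurePreserving_neg (volume : Measure ℝ)).integrableOn_comp_preimage
      (Homeomorph.neg ℝ).measurableEmbedding]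
  simp only [Function.comp_def]
  have hset : (Neg.neg ⁻¹' Set.Iic t : Set ℝ) = Set.Ici (-t) := by
    ext x; simp [neg_le]
  rw [hset]
  have : IntegrableOn (fun s : ℝ => Real.exp (-β * s)) (Set.Ici (-t)) := by
    rw [integrableOn_Ici_iff_integrableOn_Ioi]
    exact exp_neg_integrableOn_Ioi _ hβ
  refine this.congr_fun (fun s _ => ?_) measurableSet_Ici
  congr 1; ring

set_option maxHeartbeats 1600000 in
theorem bounded_mild_solution_representation {X : Type*} [NormedAddCommGroup X]
    [NormedSpace ℝ X] [CompleteSpace X] (T : ℝ → X →L[ℝ] X) (P : X →L[ℝ] X)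
    (M β : ℝ) (hM : 0 < M) (hβ : 0 < β)
    (hproj : P.comp P = P)
    (hT0 : T 0 = ContinuousLinearMap.id ℝ X)
    (hsemi : ∀ a b : ℝ, T (a + b) = (T a).comp (T b))
    (hcomm : ∀ t : ℝ, (T t).comp P = P.comp (T t))
    (hTc : ∀ x : X, Continuous fun r : ℝ => T r x)
    (hP : ∀ t : ℝ, t ≤ 0 → ∀ x : X, ‖T t (P x)‖ ≤ M * Real.exp (β * t) * ‖x‖)
    (hQ : ∀ t : ℝ, 0 ≤ t → ∀ x : X, ‖T t (x - P x)‖ ≤ M * Real.exp (-β * t) * ‖x‖)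
    (y : ℝ → X) (φ : BoundedContinuousFunction ℝ X) (Cy : ℝ)
    (hy : ∀ t : ℝ, ‖y t‖ ≤ Cy) (hyc : Continuous y)
    (hmild : ∀ τ t : ℝ, τ ≤ t →
      y t = T (t - τ) (y τ) + ∫ s in τ..t, T (t - s) (φ s)) :
    ∀ t : ℝ,
      P (y t) = -∫ s in Set.Ici t, T (t - s) (P (φ s)) ∧
      y t - P (y t) = ∫ s in Set.Iic t, T (t - s) (φ s - P (φ s)) := by
  have hTP : ∀ (r : ℝ) (x : X), T r (P x) = P (T r x) := by
    intro r x
    calc T r (P x) = ((T r).comp P) x := rfl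
      _ = (P.comp (T r)) x := by rw [hcomm]
      _ = P (T r x) := rfl
  have hgrp : ∀ (a b : ℝ) (x : X), T a (T b x) = T (a + b) x := by
    intro a b x; rw [hsemi a b]; rfl
  have hφc : Continuous (fun s : ℝ => φ s) := φ.continuous
  have hφb : ∀ s : ℝ, ‖φ s‖ ≤ ‖φ‖ := fun s => φ.norm_coe_le_norm s
  intro t
  -- continuity of integrands
  have hcontP : Continuous fun s => T (t - s) (P (φ s)) :=
    aux_joint_cont T hTc (by continuity) (P.continuous.comp hφc)
  have hcontQ : Continuous fun s => T (t - s) (φ s - P (φ s)) :=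
    aux_joint_cont T hTc (by continuity) (hφc.sub (P.continuous.comp hφc))
  -- integrability on Ioi t
  have hintP : IntegrableOn (fun s => T (t - s) (P (φ s))) (Set.Ioi t) := by
    apply Integrable.mono'
      (g := fun s => (M * ‖φ‖ * Real.exp (β * t)) * Real.exp (-β * s))
    · exact ((exp_neg_integrableOn_Ioi t hβ).const_mul _)
    · exact hcontP.aestronglyMeasurable.restrict
    · rw [ae_restrict_iff' measurableSet_Ioi]
      filter_upwards with s hs
      have e1 : Real.exp (β * (t - s)) = Real.exp (β * t) * Real.exp (-β * s) := by
        rw [← Real.exp_add]; ring_nf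
      calc ‖T (t - s) (P (φ s))‖ ≤ M * Real.exp (β * (t - s)) * ‖φ s‖ :=
            hP (t - s) (by simp at hs; linarith) (φ s)
        _ ≤ M * Real.exp (β * (t - s)) * ‖φ‖ :=
            mul_le_mul_of_nonneg_left (hφb s) (by positivity)
        _ = (M * ‖φ‖ * Real.exp (β * t)) * Real.exp (-β * s) := by rw [e1]; ring
  -- integrability on Iic t
  have hintQ : IntegrableOn (fun s => T (t - s) (φ s - P (φ s))) (Set.Iic t) := by
    apply Integrable.mono'
      (g := fun s => (M * ‖φ‖ * Real.exp (-β * t)) * Real.exp (β * s))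
    · exact ((aux_exp_Iic β t hβ).const_mul _)
    · exact hcontQ.aestronglyMeasurable.restrict
    · rw [ae_restrict_iff' measurableSet_Iic]
      filter_upwards with s hs
      have e1 : Real.exp (-β * (t - s)) = Real.exp (-β * t) * Real.exp (β * s) := by
        rw [← Real.exp_add]; ring_nf
      calc ‖T (t - s) (φ s - P (φ s))‖ ≤ M * Real.exp (-β * (t - s)) * ‖φ s‖ :=
            hQ (t - s) (by simp at hs; linarith) (φ s)
        _ ≤ M * Real.exp (-β * (t - s)) * ‖φ‖ :=
            mul_le_mul_of_nonneg_left (hφb s) (by positivity)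
        _ = (M * ‖φ‖ * Real.exp (-β * t)) * Real.exp (β * s) := by rw [e1]; ring
  constructor
  · -- P component
    have keyP : ∀ τ' : ℝ, t ≤ τ' →
        P (y t) = T (t - τ') (P (y τ')) - ∫ s in t..τ', T (t - s) (P (φ s)) := by
      intro τ' hτ'
      have hIi : IntervalIntegrable (fun s => T (τ' - s) (φ s)) volume t τ' :=
        (aux_joint_cont T hTc (by continuity) hφc).intervalIntegrable _ _
      have hIP : IntervalIntegrable (fun s => P (T (τ' - s) (φ s))) volume t τ' :=
        (P.continuous.comp (aux_joint_cont T hTc (by continuity) hφc)).intervalIntegrable _ _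
      have h2 : T (t - τ') (P (y τ')) = P (y t) + ∫ s in t..τ', T (t - s) (P (φ s)) := by
        rw [hmild t τ' hτ']
        simp only [map_add]
        congr 1
        · rw [← hTP, hgrp, show t - τ' + (τ' - t) = 0 by ring, hT0]; rfl
        · rw [← ContinuousLinearMap.intervalIntegral_comp_comm P hIi,
            ← ContinuousLinearMap.intervalIntegral_comp_comm (T (t - τ')) hIP]
          apply intervalIntegral.integral_congr
          intro s _
          show T (t - τ') (P (T (τ' - s) (φ s))) = T (t - s) (P (φ s))
          rw [← hTP, hgrp, show t - τ' + (τ' - s) = t - s by ring]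
      exact eq_sub_of_add_eq h2.symm
    have h1 : Tendsto (fun τ' => T (t - τ') (P (y τ'))) atTop (nhds 0) := by
      apply squeeze_zero_norm' (a := fun τ' => M * Real.exp (β * (t - τ')) * Cy)
      · filter_upwards [eventually_ge_atTop t] with τ' hτ'
        calc ‖T (t - τ') (P (y τ'))‖ ≤ M * Real.exp (β * (t - τ')) * ‖y τ'‖ :=
              hP (t - τ') (by linarith) (y τ')
          _ ≤ M * Real.exp (β * (t - τ')) * Cy :=
              mul_le_mul_of_nonneg_left (hy τ') (by positivity)
      · have hb : Tendsto (fun τ' : ℝ => β * (t - τ')) atTop atBot := by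
          apply Tendsto.const_mul_atBot hβ
          exact (tendsto_atBot_add_const_left atTop t
            tendsto_neg_atTop_atBot).congr (fun x => (sub_eq_add_neg t x).symm)
        have := ((Real.tendsto_exp_atBot.comp hb).const_mul M).mul_const Cy
        simpa using this
    have h2 : Tendsto (fun τ' => ∫ s in t..τ', T (t - s) (P (φ s))) atTop
        (nhds (∫ s in Set.Ioi t, T (t - s) (P (φ s)))) :=
      intervalIntegral_tendsto_integral_Ioi t hintP tendsto_id
    have heq : (fun τ' => T (t - τ') (P (y τ')) - ∫ s in t..τ', T (t - s) (P (φ s)))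
        =ᶠ[atTop] (fun _ => P (y t)) := by
      filter_upwards [eventually_ge_atTop t] with τ' hτ'
      exact (keyP τ' hτ').symm
    have hfin := tendsto_nhds_unique ((h1.sub h2).congr' heq) tendsto_const_nhds
    rw [MeasureTheory.integral_Ici_eq_integral_Ioi, ← hfin, zero_sub]
  · -- Q component
    have keyQ : ∀ τ : ℝ, τ ≤ t →
        y t - P (y t) = T (t - τ) (y τ - P (y τ)) + ∫ s in τ..t, T (t - s) (φ s - P (φ s)) := by
      intro τ hτ
      have hIi : IntervalIntegrable (fun s => T (t - s) (φ s)) volume τ t :=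
        (aux_joint_cont T hTc (by continuity) hφc).intervalIntegrable _ _
      have hIP : IntervalIntegrable (fun s => T (t - s) (P (φ s))) volume τ t :=
        hcontP.intervalIntegrable _ _
      have hP' : P (y t) = T (t - τ) (P (y τ)) + ∫ s in τ..t, T (t - s) (P (φ s)) := by
        conv_lhs => rw [hmild τ t hτ]
        rw [map_add]
        congr 1
        · exact (hTP _ _).symm
        · rw [← ContinuousLinearMap.intervalIntegral_comp_comm P hIi]
          apply intervalIntegral.integral_congr
          intro s _
          show P (T (t - s) (φ s)) = T (t - s) (P (φ s))
          exact (hTP _ _).symm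
      calc y t - P (y t)
          = (T (t - τ) (y τ) + ∫ s in τ..t, T (t - s) (φ s))
            - (T (t - τ) (P (y τ)) + ∫ s in τ..t, T (t - s) (P (φ s))) := by
            rw [← hmild τ t hτ, ← hP']
        _ = (T (t - τ) (y τ) - T (t - τ) (P (y τ)))
            + ((∫ s in τ..t, T (t - s) (φ s)) - ∫ s in τ..t, T (t - s) (P (φ s))) := by abel
        _ = T (t - τ) (y τ - P (y τ)) + ∫ s in τ..t, T (t - s) (φ s - P (φ s)) := by
            rw [← map_sub, ← intervalIntegral.integral_sub hIi hIP]
            congr 1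
            apply intervalIntegral.integral_congr
            intro s _
            show T (t - s) (φ s) - T (t - s) (P (φ s)) = T (t - s) (φ s - P (φ s))
            rw [map_sub]
    have h1 : Tendsto (fun τ => T (t - τ) (y τ - P (y τ))) atBot (nhds 0) := by
      apply squeeze_zero_norm' (a := fun τ => M * Real.exp (-β * (t - τ)) * Cy)
      · filter_upwards [eventually_le_atBot t] with τ hτ
        calc ‖T (t - τ) (y τ - P (y τ))‖ ≤ M * Real.exp (-β * (t - τ)) * ‖y τ‖ :=
              hQ (t - τ) (by linarith) (y τ)
          _ ≤ M * Real.exp (-β * (t - τ)) * Cy :=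
              mul_le_mul_of_nonneg_left (hy τ) (by positivity)
      · have hb : Tendsto (fun τ : ℝ => -β * (t - τ)) atBot atBot := by
          have : Tendsto (fun τ : ℝ => β * (τ - t)) atBot atBot := by
            apply Tendsto.const_mul_atBot hβ
            simpa [sub_eq_add_neg] using tendsto_atBot_add_const_right atBot (-t)
              (tendsto_id (α := ℝ))
          refine this.congr (fun τ => by ring)
        have := ((Real.tendsto_exp_atBot.comp hb).const_mul M).mul_const Cy
        simpa using this
    have h2 : Tendsto (fun τ => ∫ s in τ..t, T (t - s) (φ s - P (φ s))) atBot
        (nhds (∫ s in Set.Iic t, T (t - s) (φ s - P (φ s)))) :=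
      intervalIntegral_tendsto_integral_Iic t hintQ tendsto_id
    have heq : (fun τ => T (t - τ) (y τ - P (y τ)) + ∫ s in τ..t, T (t - s) (φ s - P (φ s)))
        =ᶠ[atBot] (fun _ => y t - P (y t)) := by
      filter_upwards [eventually_le_atBot t] with τ hτ
      exact (keyQ τ hτ).symm
    have hfin := tendsto_nhds_unique ((h1.add h2).congr' heq) tendsto_const_nhds
    rw [← hfin, zero_add]
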